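/- Every 2m-tree-connected loopless multigraph G has a bipartite spanning subgraph H that is m-tree-connected and satisfies d_H(A) ≥ ⌈d_G(A)/2⌉ for every vertex set A ⊆ V(G). -/

import Mathlib

namespace MG

variable {V E : Type} [Fintype V] [Fintype E] [DecidableEq V] [DecidableEq E]

/-- Degree of `v` in the spanning subgraph with edge set `S`; loops count twice. -/
def deg (ends : E → V × V) (S : Finset E) (v : V) : ℕ :=
  (S.filter fun e => (ends e).1 = v).card + (S.filter fun e => (ends e).2 = v).card

/-- Edges of `S` with exactly one end in `A`. -/
def cut (ends : E → V × V) (S : Finset E) (A : Finset V) : Finset E :=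
  S.filter fun e => ¬ (((ends e).1 ∈ A) ↔ ((ends e).2 ∈ A))

/-- Edges of `S` with both ends in `A`. -/
def inside (ends : E → V × V) (S : Finset E) (A : Finset V) : Finset E :=
  S.filter fun e => (ends e).1 ∈ A ∧ (ends e).2 ∈ A

/-- `m`-edge-connected: every edge cut has at least `m` edges. -/
def EdgeConn (ends : E → V × V) (m : ℕ) : Prop :=
  ∀ A : Finset V, A.Nonempty → A ≠ Finset.univ → m ≤ (cut ends Finset.univ A).card

/-- Essentially `lam`-edge-connected: every edge cut of size `< lam` has all its
edges incident with one common vertex. -/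
def EssEdgeConn (ends : E → V × V) (lam : ℕ) : Prop :=
  ∀ A : Finset V, A.Nonempty → A ≠ Finset.univ →
    (cut ends Finset.univ A).card < lam →
      ∃ v : V, ∀ e ∈ cut ends Finset.univ A, (ends e).1 = v ∨ (ends e).2 = v

/-- The edge set `S` induces a bipartite graph. -/
def BipOn (ends : E → V × V) (S : Finset E) : Prop :=
  ∃ X : Finset V, ∀ e ∈ S, ¬ (((ends e).1 ∈ X) ↔ ((ends e).2 ∈ X))

/-- Edges of `S` not crossing the bipartition `(X, Xᶜ)`. -/
def bad (ends : E → V × V) (S : Finset E) (X : Finset V) : Finset E :=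
  S.filter fun e => (((ends e).1 ∈ X) ↔ ((ends e).2 ∈ X))

/-- The bipartite index: fewest edge deletions making the graph `(V, S)` bipartite. -/
def biIndexOn (ends : E → V × V) (S : Finset E) : ℕ :=
  Finset.univ.inf' Finset.univ_nonempty fun X : Finset V => (bad ends S X).card

/-- Adjacency via an edge of `S`. -/
def adjOn (ends : E → V × V) (S : Finset E) (a b : V) : Prop :=
  ∃ e ∈ S, ends e = (a, b) ∨ ends e = (b, a)

/-- The spanning subgraph with edge set `S` is connected. -/
def ConnOn (ends : E → V × V) (S : Finset E) : Prop :=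
  ∀ a b : V, Relation.ReflTransGen (adjOn ends S) a b

/-- `T` is the edge set of a spanning tree. -/
def IsSpTree (ends : E → V × V) (T : Finset E) : Prop :=
  ConnOn ends T ∧ T.card + 1 = Fintype.card V

/-- `m`-tree-connected inside `S`: `m` pairwise edge-disjoint spanning trees using edges of `S`. -/
def TreeConnOn (ends : E → V × V) (m : ℕ) (S : Finset E) : Prop :=
  ∃ T : Fin m → Finset E, (∀ i, T i ⊆ S ∧ IsSpTree ends (T i)) ∧
    ∀ i j, i ≠ j → Disjoint (T i) (T j)

/-- `C` is the edge set of an odd cycle: odd, nonempty, 2-regular on its support and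
connected on its support. -/
def IsOddCycle (ends : E → V × V) (C : Finset E) : Prop :=
  C.Nonempty ∧ Odd C.card ∧ (∀ v : V, deg ends C v = 0 ∨ deg ends C v = 2) ∧
    ∀ a b : V, 0 < deg ends C a → 0 < deg ends C b →
      Relation.ReflTransGen (adjOn ends C) a b

/-- `f` is compatible with the graph with respect to the bipartition `(X, Xᶜ)`. -/
def CompatAt (ends : E → V × V) {k : ℕ} (f : V → ZMod k) (X : Finset V) : Prop :=
  (∃ x : ℕ, x ≤ (inside ends Finset.univ X).card ∧
    (∑ v ∈ X, f v) - ((2 * x : ℕ) : ZMod k) = ∑ v ∈ Xᶜ, f v) ∨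
  (∃ y : ℕ, y ≤ (inside ends Finset.univ Xᶜ).card ∧
    (∑ v ∈ X, f v) = (∑ v ∈ Xᶜ, f v) - ((2 * y : ℕ) : ZMod k))

end MG
namespace Aux
open MG Finset
open scoped Classical

set_option linter.unusedSectionVars false

variable {V E : Type} [Fintype V] [Fintype E] [DecidableEq V] [DecidableEq E]
variable {ends : E → V × V}

/-- Connectivity via edges of `S`. -/
def conn (ends : E → V × V) (S : Finset E) (a b : V) : Prop :=
  Relation.ReflTransGen (adjOn ends S) a b

lemma adj_symm {S : Finset E} {a b : V} (h : adjOn ends S a b) : adjOn ends S b a := by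
  obtain ⟨e, he, h⟩ := h; exact ⟨e, he, h.symm⟩

lemma conn_refl {S : Finset E} {a : V} : conn ends S a a := Relation.ReflTransGen.refl

lemma conn_symm {S : Finset E} {a b : V} (h : conn ends S a b) : conn ends S b a :=
  by haveI : Std.Symm (adjOn ends S) := ⟨fun _ _ h => adj_symm h⟩; exact Std.Symm.symm (r := Relation.ReflTransGen (adjOn ends S)) _ _ h

lemma conn_trans {S : Finset E} {a b c : V} (h : conn ends S a b) (h' : conn ends S b c) :
    conn ends S a c := h.trans h'

lemma conn_mono {S S' : Finset E} (hs : S ⊆ S') {a b : V} (h : conn ends S a b) :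
    conn ends S' a b :=
  Relation.ReflTransGen.mono (r := adjOn ends S) (p := adjOn ends S') (fun _ _ ⟨e, he, ho⟩ => ⟨e, hs he, ho⟩) _ _ h

lemma conn_step {S : Finset E} {e : E} (he : e ∈ S) :
    conn ends S (ends e).1 (ends e).2 :=
  Relation.ReflTransGen.single ⟨e, he, Or.inl rfl⟩

lemma conn_of_all_steps {S1 S2 : Finset E}
    (hall : ∀ e ∈ S2, conn ends S1 (ends e).1 (ends e).2) {a b : V}
    (h : conn ends S2 a b) : conn ends S1 a b := by
  induction h with
  | refl => exact conn_refl
  | tail _ hstep IH =>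
    obtain ⟨e, he, ho⟩ := hstep
    rcases ho with ho | ho
    · have h' := hall e he; rw [ho] at h'; exact IH.trans h'
    · have h' := hall e he; rw [ho] at h'; exact IH.trans (conn_symm h')

/-- Decomposition of connectivity after removing one inserted edge. -/
lemma conn_insert_elim {S : Finset E} {u : E} {a b : V}
    (h : conn ends (insert u S) a b) :
    conn ends S a b ∨ (conn ends S a (ends u).1 ∧ conn ends S (ends u).2 b)
      ∨ (conn ends S a (ends u).2 ∧ conn ends S (ends u).1 b) := by
  induction h using Relation.ReflTransGen.head_induction_on with
  | refl => exact Or.inl conn_refl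
  | head hadj _ IH =>
    rename_i a c _
    obtain ⟨e, he, ho⟩ := hadj
    rcases Finset.mem_insert.mp he with rfl | heS
    · rcases ho with ho | ho
      · have hx : (ends e).1 = a := by rw [ho]
        have hy : (ends e).2 = c := by rw [ho]
        subst hx; subst hy
        rcases IH with h2 | ⟨h2, h3⟩ | ⟨h2, h3⟩
        · exact Or.inr (Or.inl ⟨conn_refl, h2⟩)
        · exact Or.inl ((conn_symm h2).trans h3)
        · exact Or.inl h3
      · have hx : (ends e).1 = c := by rw [ho]
        have hy : (ends e).2 = a := by rw [ho]
        subst hx; subst hy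
        rcases IH with h2 | ⟨h2, h3⟩ | ⟨h2, h3⟩
        · exact Or.inr (Or.inr ⟨conn_refl, h2⟩)
        · exact Or.inl h3
        · exact Or.inl ((conn_symm h2).trans h3)
    · have hstep : conn ends S a c := Relation.ReflTransGen.single ⟨e, heS, ho⟩
      rcases IH with h2 | ⟨h2, h3⟩ | ⟨h2, h3⟩
      · exact Or.inl (hstep.trans h2)
      · exact Or.inr (Or.inl ⟨hstep.trans h2, h3⟩)
      · exact Or.inr (Or.inr ⟨hstep.trans h2, h3⟩)

/-- Inserting an edge with already-connected endpoints does not change connectivity. -/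
lemma conn_insert_eq {S : Finset E} {u : E} {a b : V}
    (hxy : conn ends S (ends u).1 (ends u).2)
    (h : conn ends (insert u S) a b) : conn ends S a b := by
  rcases conn_insert_elim h with h | ⟨h1, h2⟩ | ⟨h1, h2⟩
  · exact h
  · exact (h1.trans hxy).trans h2
  · exact (h1.trans (conn_symm hxy)).trans h2

/-- Acyclicity. -/
def Forest (ends : E → V × V) (S : Finset E) : Prop :=
  ∀ e ∈ S, ¬ conn ends (S.erase e) (ends e).1 (ends e).2

lemma forest_mono {S S' : Finset E} (hs : S' ⊆ S) (hF : Forest ends S) :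
    Forest ends S' := fun e he hc =>
  hF e (hs he) (conn_mono (Finset.erase_subset_erase e hs) hc)

lemma forest_insert {F : Finset E} {u : E} (hF : Forest ends F)
    (hnc : ¬ conn ends F (ends u).1 (ends u).2) : Forest ends (insert u F) := by
  have hu : u ∉ F := fun hu => hnc (conn_step hu)
  intro e he
  rcases Finset.mem_insert.mp he with rfl | heF
  · rw [Finset.erase_insert hu]; exact hnc
  · have hne : u ≠ e := fun h => hu (h ▸ heF)
    rw [Finset.erase_insert_of_ne hne]
    intro hc
    rcases conn_insert_elim hc with h | ⟨h1, h2⟩ | ⟨h1, h2⟩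
    · exact hF e heF h
    · refine hnc ?_
      have hstep : conn ends F (ends e).1 (ends e).2 := conn_step heF
      have hsub : F.erase e ⊆ F := Finset.erase_subset _ _
      exact ((conn_symm (conn_mono hsub h1)).trans hstep).trans (conn_symm (conn_mono hsub h2))
    · refine hnc (conn_symm ?_)
      have hstep : conn ends F (ends e).1 (ends e).2 := conn_step heF
      have hsub : F.erase e ⊆ F := Finset.erase_subset _ _
      exact ((conn_symm (conn_mono hsub h1)).trans hstep).trans (conn_symm (conn_mono hsub h2))

end Aux
namespace Aux
set_option linter.unusedSectionVars false
open MG Finset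
open scoped Classical

variable {V E : Type} [Fintype V] [Fintype E] [DecidableEq V] [DecidableEq E]
variable {ends : E → V × V}

section Exchange
variable {F : Finset E} {u w : E}
  (hu : u ∉ F) (hxy : conn ends F (ends u).1 (ends u).2)
  (hw : w ∈ F) (hwcut : ¬ conn ends (F.erase w) (ends u).1 (ends u).2)

include hu hxy hw hwcut

lemma exchange_subset_insert : F ⊆ insert w (insert u (F.erase w)) := by
  intro t ht
  by_cases htw : t = w
  · exact htw ▸ Finset.mem_insert_self _ _
  · exact Finset.mem_insert_of_mem (Finset.mem_insert_of_mem (Finset.mem_erase.mpr ⟨htw, ht⟩))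

lemma exchange_conn_w :
    conn ends (insert u (F.erase w)) (ends w).1 (ends w).2 := by
  have h0 : conn ends (insert w (F.erase w)) (ends u).1 (ends u).2 := by
    refine conn_mono ?_ hxy
    intro t ht
    by_cases htw : t = w
    · exact htw ▸ Finset.mem_insert_self _ _
    · exact Finset.mem_insert_of_mem (Finset.mem_erase.mpr ⟨htw, ht⟩)
  have hsub : F.erase w ⊆ insert u (F.erase w) := Finset.subset_insert _ _
  have hustep : conn ends (insert u (F.erase w)) (ends u).1 (ends u).2 :=
    conn_step (Finset.mem_insert_self _ _)
  rcases conn_insert_elim h0 with h | ⟨h1, h2⟩ | ⟨h1, h2⟩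
  · exact absurd h hwcut
  · exact ((conn_symm (conn_mono hsub h1)).trans hustep).trans (conn_symm (conn_mono hsub h2))
  · exact conn_symm (((conn_symm (conn_mono hsub h1)).trans hustep).trans
      (conn_symm (conn_mono hsub h2)))

lemma exchange_conn_iff {a b : V} :
    conn ends (insert u (F.erase w)) a b ↔ conn ends F a b := by
  constructor
  · intro h
    have hsub : F.erase w ⊆ F := Finset.erase_subset _ _
    rcases conn_insert_elim h with h | ⟨h1, h2⟩ | ⟨h1, h2⟩
    · exact conn_mono hsub h
    · exact ((conn_mono hsub h1).trans hxy).trans (conn_mono hsub h2)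
    · exact ((conn_mono hsub h1).trans (conn_symm hxy)).trans (conn_mono hsub h2)
  · intro h
    have h1 : conn ends (insert w (insert u (F.erase w))) a b :=
      conn_mono (exchange_subset_insert hu hxy hw hwcut) h
    exact conn_insert_eq (exchange_conn_w hu hxy hw hwcut) h1

lemma exchange_forest (hF : Forest ends F) :
    Forest ends (insert u (F.erase w)) := by
  have huw : u ∉ F.erase w := fun h => hu (Finset.mem_of_mem_erase h)
  intro e he
  rcases Finset.mem_insert.mp he with rfl | heF
  · rw [Finset.erase_insert huw]; exact hwcut
  · have hne : u ≠ e := fun h => huw (h ▸ heF)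
    rw [Finset.erase_insert_of_ne hne]
    intro hc
    have heF' : e ∈ F := Finset.mem_of_mem_erase heF
    have hsub1 : (F.erase w).erase e ⊆ F.erase e :=
      Finset.erase_subset_erase _ (Finset.erase_subset _ _)
    have hsub2 : (F.erase w).erase e ⊆ F.erase w := Finset.erase_subset _ _
    rcases conn_insert_elim hc with h | ⟨h1, h2⟩ | ⟨h1, h2⟩
    · exact hF e heF' (conn_mono hsub1 h)
    · refine hwcut ?_
      have hestep : conn ends (F.erase w) (ends e).1 (ends e).2 := conn_step heF
      exact ((conn_symm (conn_mono hsub2 h1)).trans hestep).trans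
        (conn_symm (conn_mono hsub2 h2))
    · refine hwcut (conn_symm ?_)
      have hestep : conn ends (F.erase w) (ends e).1 (ends e).2 := conn_step heF
      exact ((conn_symm (conn_mono hsub2 h1)).trans hestep).trans
        (conn_symm (conn_mono hsub2 h2))

end Exchange

/-- Connectivity class of `v`. -/
noncomputable def cl (ends : E → V × V) (S : Finset E) (v : V) : Finset V :=
  univ.filter (fun w => conn ends S v w)

lemma mem_cl {S : Finset E} {v w : V} : w ∈ cl ends S v ↔ conn ends S v w := by
  simp [cl]

lemma self_mem_cl {S : Finset E} {v : V} : v ∈ cl ends S v := mem_cl.mpr conn_refl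

lemma cl_eq_of_conn {S : Finset E} {a b : V} (h : conn ends S a b) :
    cl ends S a = cl ends S b := by
  ext w; simp only [mem_cl]
  exact ⟨fun h' => (conn_symm h).trans h', fun h' => h.trans h'⟩

lemma conn_of_cl_eq {S : Finset E} {a b : V} (h : cl ends S a = cl ends S b) :
    conn ends S a b := mem_cl.mp (h ▸ self_mem_cl)

/-- Number of connected components. -/
noncomputable def ncomp (ends : E → V × V) (S : Finset E) : ℕ :=
  (univ.image (cl ends S)).card

lemma ncomp_congr {S S' : Finset E}
    (h : ∀ a b, conn ends S a b ↔ conn ends S' a b) : ncomp ends S = ncomp ends S' := by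
  have : cl ends S = cl ends S' := by
    funext v; ext w; simp only [mem_cl]; exact h v w
  rw [ncomp, this, ncomp]

lemma conn_empty {a b : V} (h : conn ends (∅ : Finset E) a b) : a = b := by
  induction h with
  | refl => rfl
  | tail _ hstep IH => obtain ⟨e, he, _⟩ := hstep; exact absurd he (Finset.notMem_empty e)

lemma ncomp_empty : ncomp ends (∅ : Finset E) = Fintype.card V := by
  have hcl : ∀ v : V, cl ends (∅ : Finset E) v = {v} := by
    intro v; ext w
    simp only [mem_cl, Finset.mem_singleton]
    exact ⟨fun h => (conn_empty h).symm ▸ (conn_empty h).symm, fun h => h ▸ conn_refl⟩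
  rw [ncomp]
  have : univ.image (cl ends (∅ : Finset E)) = univ.image (fun v : V => ({v} : Finset V)) := by
    apply Finset.image_congr; intro v _; exact hcl v
  rw [this, Finset.card_image_of_injective _ (fun a b h => Finset.singleton_injective h)]
  rfl

lemma sumQ_eq_ncomp (S : Finset E) :
    ∑ v : V, ((cl ends S v).card : ℚ)⁻¹ = ncomp ends S := by
  rw [← Finset.sum_fiberwise_of_maps_to
    (fun v (_ : v ∈ univ) => Finset.mem_image_of_mem (cl ends S) (Finset.mem_univ v))
    (fun v => ((cl ends S v).card : ℚ)⁻¹)]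
  have hfib : ∀ C ∈ univ.image (cl ends S),
      univ.filter (fun v => cl ends S v = C) = C := by
    intro C hC
    obtain ⟨w, _, rfl⟩ := Finset.mem_image.mp hC
    ext v
    simp only [Finset.mem_filter, Finset.mem_univ, true_and, mem_cl]
    exact ⟨fun h => conn_symm (conn_of_cl_eq h), fun h => cl_eq_of_conn (conn_symm h)⟩
  have hinner : ∀ C ∈ univ.image (cl ends S),
      (∑ v ∈ univ.filter (fun v => cl ends S v = C), ((cl ends S v).card : ℚ)⁻¹) = 1 := by
    intro C hC
    have hconst : ∀ v ∈ univ.filter (fun v => cl ends S v = C),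
        ((cl ends S v).card : ℚ)⁻¹ = ((C.card : ℚ))⁻¹ := by
      intro v hv; rw [(Finset.mem_filter.mp hv).2]
    rw [Finset.sum_congr rfl hconst, hfib _ hC, Finset.sum_const, nsmul_eq_mul]
    obtain ⟨w, _, rfl⟩ := Finset.mem_image.mp hC
    have hpos : 0 < (cl ends S w).card := Finset.card_pos.mpr ⟨w, self_mem_cl⟩
    have hne : ((cl ends S w).card : ℚ) ≠ 0 := (Nat.cast_pos.mpr hpos).ne'
    field_simp
  rw [Finset.sum_congr rfl hinner, Finset.sum_const, nsmul_eq_mul, mul_one, ncomp]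

end Aux
namespace Aux
set_option linter.unusedSectionVars false
set_option maxHeartbeats 1000000
open MG Finset
open scoped Classical

variable {V E : Type} [Fintype V] [Fintype E] [DecidableEq V] [DecidableEq E]
variable {ends : E → V × V}

lemma conn_erase_decomp {F : Finset E} {e : E} (he : e ∈ F) {a b : V} :
    conn ends F a b ↔ conn ends (F.erase e) a b ∨
      (conn ends (F.erase e) a (ends e).1 ∧ conn ends (F.erase e) (ends e).2 b) ∨
      (conn ends (F.erase e) a (ends e).2 ∧ conn ends (F.erase e) (ends e).1 b) := by
  constructor
  · intro h
    have h' : conn ends (insert e (F.erase e)) a b := by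
      rwa [Finset.insert_erase he]
    exact conn_insert_elim h'
  · have hsub : F.erase e ⊆ F := Finset.erase_subset _ _
    have hstep : conn ends F (ends e).1 (ends e).2 := conn_step he
    rintro (h | ⟨h1, h2⟩ | ⟨h1, h2⟩)
    · exact conn_mono hsub h
    · exact ((conn_mono hsub h1).trans hstep).trans (conn_mono hsub h2)
    · exact ((conn_mono hsub h1).trans (conn_symm hstep)).trans (conn_mono hsub h2)

lemma sumQ_erase {F : Finset E} {e : E} (he : e ∈ F)
    (hcut : ¬ conn ends (F.erase e) (ends e).1 (ends e).2) :
    ∑ v : V, ((cl ends (F.erase e) v).card : ℚ)⁻¹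
      = (∑ v : V, ((cl ends F v).card : ℚ)⁻¹) + 1 := by
  set F' := F.erase e with hF'
  have hAB : Disjoint (cl ends F' (ends e).1) (cl ends F' (ends e).2) := by
    rw [Finset.disjoint_left]
    intro v hvA hvB
    exact hcut ((mem_cl.mp hvA).trans (conn_symm (mem_cl.mp hvB)))
  have hclAB : ∀ v ∈ cl ends F' (ends e).1 ∪ cl ends F' (ends e).2,
      cl ends F v = cl ends F' (ends e).1 ∪ cl ends F' (ends e).2 := by
    intro v hv
    rw [Finset.mem_union, mem_cl, mem_cl] at hv
    ext w
    simp only [mem_cl, Finset.mem_union]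
    rw [conn_erase_decomp he, ← hF']
    constructor
    · rintro (h | ⟨h1, h2⟩ | ⟨h1, h2⟩)
      · rcases hv with hv | hv
        · exact Or.inl (hv.trans h)
        · exact Or.inr (hv.trans h)
      · exact Or.inr h2
      · exact Or.inl h2
    · intro hw
      rcases hv with hv | hv <;> rcases hw with hw | hw
      · exact Or.inl ((conn_symm hv).trans hw)
      · exact Or.inr (Or.inl ⟨conn_symm hv, hw⟩)
      · exact Or.inr (Or.inr ⟨conn_symm hv, hw⟩)
      · exact Or.inl ((conn_symm hv).trans hw)
  have hrest : ∀ v, v ∉ cl ends F' (ends e).1 ∪ cl ends F' (ends e).2 →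
      cl ends F v = cl ends F' v := by
    intro v hv
    rw [Finset.mem_union] at hv
    push_neg at hv
    ext w
    simp only [mem_cl]
    rw [conn_erase_decomp he, ← hF']
    constructor
    · rintro (h | ⟨h1, h2⟩ | ⟨h1, h2⟩)
      · exact h
      · exact (hv.1 (mem_cl.mpr (conn_symm h1))).elim
      · exact (hv.2 (mem_cl.mpr (conn_symm h1))).elim
    · exact fun h => Or.inl h
  have hone : ∀ (C : Finset V), C.Nonempty →
      ∑ v ∈ C, ((C.card : ℚ))⁻¹ = 1 := by
    intro C hC
    rw [Finset.sum_const, nsmul_eq_mul]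
    have : ((C.card : ℚ)) ≠ 0 := Nat.cast_ne_zero.mpr (Finset.card_ne_zero_of_mem hC.choose_spec)
    field_simp
  have hxA : (ends e).1 ∈ cl ends F' (ends e).1 := self_mem_cl
  have hyB : (ends e).2 ∈ cl ends F' (ends e).2 := self_mem_cl
  rw [← Finset.sum_add_sum_compl (cl ends F' (ends e).1 ∪ cl ends F' (ends e).2)
        (fun v => ((cl ends F' v).card : ℚ)⁻¹),
      ← Finset.sum_add_sum_compl (cl ends F' (ends e).1 ∪ cl ends F' (ends e).2)
        (fun v => ((cl ends F v).card : ℚ)⁻¹)]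
  have hrest2 : ∑ v ∈ (cl ends F' (ends e).1 ∪ cl ends F' (ends e).2)ᶜ,
        ((cl ends F v).card : ℚ)⁻¹
      = ∑ v ∈ (cl ends F' (ends e).1 ∪ cl ends F' (ends e).2)ᶜ,
        ((cl ends F' v).card : ℚ)⁻¹ := by
    refine Finset.sum_congr rfl (fun v hv => ?_)
    rw [hrest v (Finset.mem_compl.mp hv)]
  have hFpart : ∑ v ∈ cl ends F' (ends e).1 ∪ cl ends F' (ends e).2,
      ((cl ends F v).card : ℚ)⁻¹ = 1 := by
    have hcongr : ∀ v ∈ cl ends F' (ends e).1 ∪ cl ends F' (ends e).2,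
        ((cl ends F v).card : ℚ)⁻¹
          = (((cl ends F' (ends e).1 ∪ cl ends F' (ends e).2).card : ℚ))⁻¹ := by
      intro v hv; rw [hclAB v hv]
    rw [Finset.sum_congr rfl hcongr]
    exact hone _ ⟨(ends e).1, Finset.mem_union_left _ hxA⟩
  have hF'part : ∑ v ∈ cl ends F' (ends e).1 ∪ cl ends F' (ends e).2,
      ((cl ends F' v).card : ℚ)⁻¹ = 2 := by
    rw [Finset.sum_union hAB]
    have hA1 : ∀ v ∈ cl ends F' (ends e).1,
        ((cl ends F' v).card : ℚ)⁻¹ = (((cl ends F' (ends e).1).card : ℚ))⁻¹ := by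
      intro v hv; rw [← cl_eq_of_conn (mem_cl.mp hv)]
    have hB1 : ∀ v ∈ cl ends F' (ends e).2,
        ((cl ends F' v).card : ℚ)⁻¹ = (((cl ends F' (ends e).2).card : ℚ))⁻¹ := by
      intro v hv; rw [← cl_eq_of_conn (mem_cl.mp hv)]
    rw [Finset.sum_congr rfl hA1, Finset.sum_congr rfl hB1, hone _ ⟨_, hxA⟩, hone _ ⟨_, hyB⟩]
    norm_num
  rw [hrest2, hFpart, hF'part]
  ring

lemma forest_card {F : Finset E} (hF : Forest ends F) :
    F.card + ncomp ends F = Fintype.card V := by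
  induction F using Finset.strongInduction with
  | _ F IH =>
    rcases F.eq_empty_or_nonempty with rfl | ⟨e, he⟩
    · rw [Finset.card_empty, ncomp_empty, zero_add]
    · have hF' : Forest ends (F.erase e) := forest_mono (Finset.erase_subset _ _) hF
      have hIH := IH (F.erase e) (Finset.erase_ssubset he) hF'
      have hQ := sumQ_erase (ends := ends) he (hF e he)
      rw [sumQ_eq_ncomp, sumQ_eq_ncomp] at hQ
      have hnc : ncomp ends (F.erase e) = ncomp ends F + 1 := by exact_mod_cast hQ
      rw [Finset.card_erase_of_mem he, hnc] at hIH
      have hpos : 0 < F.card := Finset.card_pos.mpr ⟨e, he⟩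
      omega

lemma conn_of_ncomp_one {S : Finset E} (h : ncomp ends S = 1) (a b : V) :
    conn ends S a b := by
  obtain ⟨C, hC⟩ := Finset.card_eq_one.mp h
  have ha : cl ends S a = C := by
    have := Finset.mem_image_of_mem (cl ends S) (Finset.mem_univ a)
    rw [hC] at this; exact Finset.mem_singleton.mp this
  have hb : cl ends S b = C := by
    have := Finset.mem_image_of_mem (cl ends S) (Finset.mem_univ b)
    rw [hC] at this; exact Finset.mem_singleton.mp this
  exact conn_of_cl_eq (ha.trans hb.symm)

lemma ncomp_pos [Nonempty V] (S : Finset E) : 1 ≤ ncomp ends S :=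
  Finset.card_pos.mpr ⟨cl ends S (Classical.arbitrary V),
    Finset.mem_image_of_mem _ (Finset.mem_univ _)⟩

lemma ncomp_le (S : Finset E) : ncomp ends S ≤ Fintype.card V :=
  le_trans (Finset.card_image_le) (by simp)

/-- In a forest, the ends of a connected pair are joined inside the set of
edges whose removal disconnects the pair. -/
lemma forest_conn_filter {F : Finset E} (hF : Forest ends F) {x y : V}
    (h : conn ends F x y) :
    conn ends (F.filter fun f => ¬ conn ends (F.erase f) x y) x y := by
  induction F using Finset.strongInduction with
  | _ F IH =>
    by_cases hall : ∀ f ∈ F, ¬ conn ends (F.erase f) x y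
    · rwa [Finset.filter_true_of_mem hall]
    · push_neg at hall
      obtain ⟨f, hf, hcf⟩ := hall
      have hIH := IH (F.erase f) (Finset.erase_ssubset hf)
        (forest_mono (Finset.erase_subset _ _) hF) hcf
      refine conn_mono ?_ hIH
      intro g hg
      rw [Finset.mem_filter] at hg ⊢
      obtain ⟨hgF', hgcut⟩ := hg
      have hgF : g ∈ F := Finset.mem_of_mem_erase hgF'
      refine ⟨hgF, ?_⟩
      intro hcg
      -- K = remove both f and g
      have hgf : g ≠ f := (Finset.mem_erase.mp hgF').1
      have hsubK : F.erase g ⊆ insert f ((F.erase f).erase g) := by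
        intro t ht
        obtain ⟨htg, htF⟩ := Finset.mem_erase.mp ht
        by_cases htf : t = f
        · exact htf ▸ Finset.mem_insert_self _ _
        · exact Finset.mem_insert_of_mem (Finset.mem_erase.mpr ⟨htg,
            Finset.mem_erase.mpr ⟨htf, htF⟩⟩)
      have hc1 : conn ends (insert f ((F.erase f).erase g)) x y := conn_mono hsubK hcg
      have hKsub : (F.erase f).erase g ⊆ F.erase f := Finset.erase_subset _ _
      rcases conn_insert_elim hc1 with h' | ⟨h1, h2⟩ | ⟨h1, h2⟩
      · exact hgcut h'
      · -- x ~ f1, f2 ~ y in K; so f1 ~ f2 in F.erase f, contradicting forest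
        refine hF f hf ?_
        exact ((conn_symm (conn_mono hKsub h1)).trans hcf).trans (conn_symm (conn_mono hKsub h2))
      · refine hF f hf (conn_symm ?_)
        exact ((conn_symm (conn_mono hKsub h1)).trans hcf).trans (conn_symm (conn_mono hKsub h2))

end Aux
namespace Aux
set_option linter.unusedSectionVars false
set_option maxHeartbeats 1000000
open MG Finset
open scoped Classical

variable {V E : Type} [Fintype V] [Fintype E] [DecidableEq V] [DecidableEq E]
variable {ends : E → V × V}

lemma exists_cross_edge {T : Finset E} {c : V → Finset V} {a b : V}
    (h : conn ends T a b) (hne : c a ≠ c b) :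
    ∃ e ∈ T, c (ends e).1 ≠ c (ends e).2 := by
  induction h with
  | refl => exact absurd rfl hne
  | tail _ hstep IH =>
    rename_i b' b'' _
    by_cases hmid : c a = c b'
    · obtain ⟨e, he, ho⟩ := hstep
      refine ⟨e, he, ?_⟩
      rcases ho with ho | ho <;> rw [ho]
      · simpa using fun hq => hne (hmid.trans hq)
      · simpa using fun hq => hne (hmid.trans hq.symm)
    · exact IH hmid

lemma tree_cross {T : Finset E} (hT : ConnOn ends T) (c : V → Finset V) :
    (univ.image c).card ≤ (T.filter fun e => c (ends e).1 ≠ c (ends e).2).card + 1 := by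
  suffices H : ∀ (N : ℕ) (c : V → Finset V), (univ.image c).card ≤ N →
      (univ.image c).card ≤ (T.filter fun e => c (ends e).1 ≠ c (ends e).2).card + 1 from
    H _ c le_rfl
  intro N
  induction N with
  | zero => intro c hc; omega
  | succ N IH =>
    intro c hc
    by_cases hcN : (univ.image c).card ≤ N
    · exact IH c hcN
    by_cases htriv : (univ.image c).card ≤ 1
    · omega
    have h2 : 1 < (univ.image c).card := by omega
    obtain ⟨t1, ht1, t2, ht2, hne12⟩ := Finset.one_lt_card.mp h2
    obtain ⟨a, _, rfl⟩ := Finset.mem_image.mp ht1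
    obtain ⟨b, _, rfl⟩ := Finset.mem_image.mp ht2
    obtain ⟨e, he, hce⟩ := exists_cross_edge (hT a b) hne12
    set c' := fun w => if c w = c (ends e).2 then c (ends e).1 else c w with hc'
    have himg : univ.image c' = (univ.image c).erase (c (ends e).2) := by
      ext t
      constructor
      · intro ht
        obtain ⟨w, _, rfl⟩ := Finset.mem_image.mp ht
        by_cases hw : c w = c (ends e).2
        · refine Finset.mem_erase.mpr ⟨?_, ?_⟩
          · simp only [hc', hw, if_pos]; exact hce
          · simp only [hc', hw, if_pos]
            exact Finset.mem_image_of_mem c (Finset.mem_univ (ends e).1)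
        · refine Finset.mem_erase.mpr ⟨?_, ?_⟩
          · simp only [hc', hw, if_neg]; exact hw
          · simp only [hc', hw, if_neg]
            exact Finset.mem_image_of_mem c (Finset.mem_univ w)
      · intro ht
        obtain ⟨htq, htm⟩ := Finset.mem_erase.mp ht
        obtain ⟨w, _, rfl⟩ := Finset.mem_image.mp htm
        refine Finset.mem_image.mpr ⟨w, Finset.mem_univ w, ?_⟩
        simp only [hc']
        rw [if_neg htq]
    have hq : c (ends e).2 ∈ univ.image c := Finset.mem_image_of_mem c (Finset.mem_univ _)
    have hcard' : (univ.image c').card = (univ.image c).card - 1 := by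
      rw [himg, Finset.card_erase_of_mem hq]
    have hemem : e ∈ T.filter fun e' => c (ends e').1 ≠ c (ends e').2 :=
      Finset.mem_filter.mpr ⟨he, hce⟩
    have hsub : (T.filter fun e' => c' (ends e').1 ≠ c' (ends e').2)
        ⊆ (T.filter fun e' => c (ends e').1 ≠ c (ends e').2).erase e := by
      intro e' he'
      obtain ⟨heT, hd⟩ := Finset.mem_filter.mp he'
      refine Finset.mem_erase.mpr ⟨?_, Finset.mem_filter.mpr ⟨heT, ?_⟩⟩
      · rintro rfl
        apply hd
        simp only [hc']
        simp
      · intro hcc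
        apply hd
        simp only [hc', hcc]
    have hle : (T.filter fun e' => c' (ends e').1 ≠ c' (ends e').2).card
        ≤ (T.filter fun e' => c (ends e').1 ≠ c (ends e').2).card - 1 := by
      calc _ ≤ ((T.filter fun e' => c (ends e').1 ≠ c (ends e').2).erase e).card :=
            Finset.card_le_card hsub
        _ = _ := Finset.card_erase_of_mem hemem
    have hIH := IH c' (by omega)
    have hpos : 1 ≤ (T.filter fun e' => c (ends e').1 ≠ c (ends e').2).card :=
      Finset.card_pos.mpr ⟨e, hemem⟩
    omega

lemma card_filter_split (p q : E → Prop) [DecidablePred p] [DecidablePred q] (s : Finset E) :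
    (s.filter p).card
      = (s.filter fun e => p e ∧ q e).card + (s.filter fun e => p e ∧ ¬ q e).card := by
  rw [← Finset.filter_filter, ← Finset.filter_filter]
  exact (Finset.card_filter_add_card_filter_not (p := q)).symm

lemma cut_double_count (W : Finset E) (c : V → Finset V) :
    ∑ t ∈ univ.image c, (cut ends W (univ.filter fun v => c v = t)).card
      = 2 * (W.filter fun e => c (ends e).1 ≠ c (ends e).2).card := by
  have hmem : ∀ (t : Finset V) (v : V), v ∈ univ.filter (fun v => c v = t) ↔ c v = t := by
    intro t v; simp
  have hcut : ∀ t, cut ends W (univ.filter fun v => c v = t)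
      = W.filter fun e => ¬(c (ends e).1 = t ↔ c (ends e).2 = t) := by
    intro t
    refine Finset.filter_congr (fun e _ => ?_)
    rw [hmem, hmem]
  calc ∑ t ∈ univ.image c, (cut ends W (univ.filter fun v => c v = t)).card
      = ∑ t ∈ univ.image c, ∑ e ∈ W,
          if ¬(c (ends e).1 = t ↔ c (ends e).2 = t) then 1 else 0 := by
        refine Finset.sum_congr rfl (fun t _ => ?_)
        rw [hcut t, Finset.card_filter]
    _ = ∑ e ∈ W, ∑ t ∈ univ.image c,
          if ¬(c (ends e).1 = t ↔ c (ends e).2 = t) then 1 else 0 := Finset.sum_comm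
    _ = ∑ e ∈ W, (if c (ends e).1 ≠ c (ends e).2 then 2 else 0) := by
        refine Finset.sum_congr rfl (fun e _ => ?_)
        rw [← Finset.card_filter]
        by_cases hc : c (ends e).1 = c (ends e).2
        · rw [if_neg (by simpa using hc)]
          rw [Finset.card_eq_zero]
          refine Finset.filter_eq_empty_iff.mpr (fun t _ => ?_)
          rw [hc]; simp
        · rw [if_pos hc]
          have : (univ.image c).filter (fun t => ¬(c (ends e).1 = t ↔ c (ends e).2 = t))
              = {c (ends e).1, c (ends e).2} := by
            ext t
            simp only [Finset.mem_filter, Finset.mem_insert, Finset.mem_singleton]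
            constructor
            · rintro ⟨_, hd⟩
              by_cases h1 : c (ends e).1 = t
              · exact Or.inl h1.symm
              · by_cases h2 : c (ends e).2 = t
                · exact Or.inr h2.symm
                · exact absurd (iff_of_false h1 h2) hd
            · rintro (rfl | rfl)
              · exact ⟨Finset.mem_image_of_mem c (Finset.mem_univ _),
                  by simp [hc, Ne.symm hc]⟩
              · exact ⟨Finset.mem_image_of_mem c (Finset.mem_univ _),
                  by simp [hc, Ne.symm hc]⟩
          rw [this, Finset.card_insert_of_notMem (by simpa using hc), Finset.card_singleton]
    _ = 2 * (W.filter fun e => c (ends e).1 ≠ c (ends e).2).card := by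
        rw [Finset.card_filter, Finset.mul_sum]
        refine Finset.sum_congr rfl (fun e _ => ?_)
        by_cases hc : c (ends e).1 = c (ends e).2 <;> simp [hc]

end Aux
namespace Aux
set_option linter.unusedSectionVars false
set_option maxHeartbeats 1000000
open MG Finset
open scoped Classical

variable {V E : Type} [Fintype V] [Fintype E] [DecidableEq V] [DecidableEq E]
variable {ends : E → V × V}

lemma maxcut_key {X : Finset V}
    (hmax : ∀ Y : Finset V, (cut ends univ Y).card ≤ (cut ends univ X).card)
    (A : Finset V) :
    (cut ends univ A).card ≤ 2 * (cut ends (cut ends univ X) A).card := by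
  have hY := hmax (symmDiff X A)
  -- four atomic pieces
  have hsd2 : (cut ends univ (symmDiff X A)).card
      = (univ.filter fun e => (¬((ends e).1 ∈ X ↔ (ends e).2 ∈ X))
            ∧ ((ends e).1 ∈ A ↔ (ends e).2 ∈ A)).card
        + (univ.filter fun e => (¬((ends e).1 ∈ A ↔ (ends e).2 ∈ A))
            ∧ ((ends e).1 ∈ X ↔ (ends e).2 ∈ X)).card := by
    rw [MG.cut]
    rw [← Finset.card_union_of_disjoint (by
      rw [Finset.disjoint_left]
      intro e he1 he2
      have p1 := (Finset.mem_filter.mp he1).2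
      have p2 := (Finset.mem_filter.mp he2).2
      tauto)]
    congr 1
    rw [← Finset.filter_or]
    refine Finset.filter_congr (fun e _ => ?_)
    simp only [Finset.mem_symmDiff]
    by_cases h1 : (ends e).1 ∈ X <;> by_cases h2 : (ends e).2 ∈ X <;>
      by_cases h3 : (ends e).1 ∈ A <;> by_cases h4 : (ends e).2 ∈ A <;>
      simp [h1, h2, h3, h4]
  have hX2 : (cut ends univ X).card
      = (univ.filter fun e => (¬((ends e).1 ∈ X ↔ (ends e).2 ∈ X))
            ∧ ((ends e).1 ∈ A ↔ (ends e).2 ∈ A)).card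
        + (univ.filter fun e => (¬((ends e).1 ∈ X ↔ (ends e).2 ∈ X))
            ∧ ¬((ends e).1 ∈ A ↔ (ends e).2 ∈ A)).card := by
    rw [MG.cut]; exact card_filter_split _ _ _
  have hA2 : (cut ends univ A).card
      = (univ.filter fun e => (¬((ends e).1 ∈ A ↔ (ends e).2 ∈ A))
            ∧ ((ends e).1 ∈ X ↔ (ends e).2 ∈ X)).card
        + (univ.filter fun e => (¬((ends e).1 ∈ A ↔ (ends e).2 ∈ A))
            ∧ ¬((ends e).1 ∈ X ↔ (ends e).2 ∈ X)).card := by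
    rw [MG.cut]; exact card_filter_split _ _ _
  have hHA : (cut ends (cut ends univ X) A).card
      = (univ.filter fun e => (¬((ends e).1 ∈ A ↔ (ends e).2 ∈ A))
            ∧ ¬((ends e).1 ∈ X ↔ (ends e).2 ∈ X)).card := by
    rw [MG.cut, MG.cut, Finset.filter_filter]
    congr 1
    refine Finset.filter_congr (fun e _ => ?_)
    tauto
  have hcomm : (univ.filter fun e => (¬((ends e).1 ∈ A ↔ (ends e).2 ∈ A))
            ∧ ¬((ends e).1 ∈ X ↔ (ends e).2 ∈ X)).card
      = (univ.filter fun e => (¬((ends e).1 ∈ X ↔ (ends e).2 ∈ X))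
            ∧ ¬((ends e).1 ∈ A ↔ (ends e).2 ∈ A)).card := by
    congr 1
    refine Finset.filter_congr (fun e _ => ?_)
    tauto
  rw [hsd2, hX2] at hY
  rw [hA2, hHA]
  omega

end Aux
namespace Aux
set_option linter.unusedSectionVars false
set_option maxHeartbeats 1000000
open MG Finset
open scoped Classical

variable {V E : Type} [Fintype V] [Fintype E] [DecidableEq V] [DecidableEq E]
variable {ends : E → V × V}

lemma getLastD_append (l₁ l₂ : List E) (a d : E) :
    (l₁ ++ a :: l₂).getLastD d = l₂.getLastD a := by
  induction l₁ generalizing d with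
  | nil => rw [List.nil_append, List.getLastD_cons]
  | cons b l₁ IH => rw [List.cons_append, List.getLastD_cons]; exact IH b

lemma not_nodup_split {l : List E} (h : ¬ l.Nodup) :
    ∃ (a : E) (l₁ l₂ l₃ : List E), l = l₁ ++ a :: l₂ ++ a :: l₃ := by
  induction l with
  | nil => exact absurd List.nodup_nil h
  | cons b l IH =>
    rw [List.nodup_cons] at h
    push_neg at h
    by_cases hb : b ∈ l
    · obtain ⟨p, q, rfl⟩ := List.append_of_mem hb
      exact ⟨b, [], p, q, rfl⟩
    · obtain ⟨a, l₁, l₂, l₃, rfl⟩ := IH (h hb)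
      exact ⟨a, b :: l₁, l₂, l₃, rfl⟩

section Packing

variable {m : ℕ} {S : Finset E}

/-- A valid family of edge-disjoint spanning forests inside `S`. -/
def Fam (ends : E → V × V) (S : Finset E) (F : Fin m → Finset E) : Prop :=
  (∀ i, F i ⊆ S ∧ Forest ends (F i)) ∧ ∀ i j, i ≠ j → Disjoint (F i) (F j)

/-- `e` can be added to some forest of the family. -/
def Absorb (ends : E → V × V) (F : Fin m → Finset E) (e : E) : Prop :=
  ∃ j, e ∉ F j ∧ ¬ conn ends (F j) (ends e).1 (ends e).2

/-- Exchange arcs. -/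
def Arc (ends : E → V × V) (F : Fin m → Finset E) (e f : E) : Prop :=
  ∃ j, f ∈ F j ∧ e ∉ F j ∧ conn ends (F j) (ends e).1 (ends e).2 ∧
    ¬ conn ends ((F j).erase f) (ends e).1 (ends e).2

/-- A chain of arcs starting at a given edge. -/
def ArcChain (ends : E → V × V) (F : Fin m → Finset E) : List E → E → Prop
  | [], _ => True
  | f :: l, g => Arc ends F g f ∧ ArcChain ends F l f

lemma arcChain_append {F : Fin m → Finset E} (l₁ l₂ : List E) (g : E) :
    ArcChain ends F (l₁ ++ l₂) g ↔ ArcChain ends F l₁ g ∧ ArcChain ends F l₂ (l₁.getLastD g) := by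
  induction l₁ generalizing g with
  | nil => simp [ArcChain]
  | cons f l₁ IH =>
    rw [List.cons_append, List.getLastD_cons]
    show Arc ends F g f ∧ ArcChain ends F (l₁ ++ l₂) f ↔ _
    rw [IH f]
    show _ ↔ (Arc ends F g f ∧ ArcChain ends F l₁ f) ∧ _
    tauto

lemma chain_shorten {F : Fin m → Finset E} {l : List E} {u : E}
    (hc : ArcChain ends F l u) (habs : Absorb ends F (l.getLastD u))
    (hnd : ¬ (u :: l).Nodup) :
    ∃ l' : List E, l'.length < l.length ∧ ArcChain ends F l' u ∧
      Absorb ends F (l'.getLastD u) := by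
  rw [List.nodup_cons] at hnd
  push_neg at hnd
  by_cases hu : u ∈ l
  · obtain ⟨p, q, rfl⟩ := List.append_of_mem hu
    have h1 := (arcChain_append p (u :: q) u).mp hc
    have h2 : ArcChain ends F (u :: q) (p.getLastD u) := h1.2
    refine ⟨q, by simp; omega, h2.2, ?_⟩
    rwa [getLastD_append] at habs
  · obtain ⟨a, l₁, l₂, l₃, rfl⟩ := not_nodup_split (hnd hu)
    have hassoc : l₁ ++ a :: l₂ ++ a :: l₃ = l₁ ++ a :: (l₂ ++ a :: l₃) := by simp
    rw [hassoc] at hc habs ⊢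
    have h1 := (arcChain_append l₁ (a :: (l₂ ++ a :: l₃)) u).mp hc
    have harc : Arc ends F (l₁.getLastD u) a := h1.2.1
    have h2 : ArcChain ends F (l₂ ++ a :: l₃) a := h1.2.2
    have h3 : ArcChain ends F l₃ a := ((arcChain_append l₂ (a :: l₃) a).mp h2).2.2
    refine ⟨l₁ ++ a :: l₃, by simp, ?_, ?_⟩
    · exact (arcChain_append l₁ (a :: l₃) u).mpr ⟨h1.1, harc, h3⟩
    · rw [getLastD_append]
      rw [getLastD_append, getLastD_append] at habs
      exact habs

lemma absorb_update {F : Fin m → Finset E} {u e₁ : E} {i₁ : Fin m}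
    (hu : u ∉ F i₁) (he₁ : e₁ ∈ F i₁)
    (hconnu : conn ends (F i₁) (ends u).1 (ends u).2)
    (hcut : ¬ conn ends ((F i₁).erase e₁) (ends u).1 (ends u).2)
    {e : E} (hne : e ≠ u) (h : Absorb ends F e) :
    Absorb ends (Function.update F i₁ (insert u ((F i₁).erase e₁))) e := by
  obtain ⟨j, hej, hc⟩ := h
  by_cases hj : j = i₁
  · subst hj
    refine ⟨j, ?_, ?_⟩
    · rw [Function.update_self]
      intro hmem
      rcases Finset.mem_insert.mp hmem with rfl | hmem
      · exact hne rfl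
      · exact hej (Finset.mem_of_mem_erase hmem)
    · rw [Function.update_self]
      intro hc'
      exact hc ((exchange_conn_iff hu hconnu he₁ hcut).mp hc')
  · exact ⟨j, by rwa [Function.update_of_ne hj], by rwa [Function.update_of_ne hj]⟩

lemma swap_chain (F : Fin m → Finset E) (hFam : Fam ends S F) {u e₁ : E} {i₁ : Fin m}
    (hu : ∀ i, u ∉ F i) (he₁ : e₁ ∈ F i₁)
    (hconnu : conn ends (F i₁) (ends u).1 (ends u).2)
    (hcut : ¬ conn ends ((F i₁).erase e₁) (ends u).1 (ends u).2) :
    ∀ (l : List E) (g : E), ArcChain ends F l g → Absorb ends F (l.getLastD g) →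
      g ≠ u → u ∉ l → e₁ ∉ l →
      ∃ (h : E) (l'' : List E), (h = g ∨ h = e₁) ∧
        ArcChain ends (Function.update F i₁ (insert u ((F i₁).erase e₁))) l'' h ∧
        Absorb ends (Function.update F i₁ (insert u ((F i₁).erase e₁))) (l''.getLastD h) ∧
        l''.length ≤ l.length := by
  have hiff : ∀ a b, conn ends (insert u ((F i₁).erase e₁)) a b ↔ conn ends (F i₁) a b :=
    fun a b => exchange_conn_iff (hu i₁) hconnu he₁ hcut
  have hForest := (hFam.1 i₁).2
  intro l
  induction l with
  | nil =>
    intro g hc habs hgu _ _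
    exact ⟨g, [], Or.inl rfl, trivial,
      absorb_update (hu i₁) he₁ hconnu hcut hgu habs, le_refl _⟩
  | cons f l₂ IH =>
    intro g hc habs hgu hul hel
    have hfu : f ≠ u := fun h => hul (h ▸ List.mem_cons_self)
    have hfe₁ : f ≠ e₁ := fun h => hel (h ▸ List.mem_cons_self)
    have hul₂ : u ∉ l₂ := fun h => hul (List.mem_cons_of_mem f h)
    have hel₂ : e₁ ∉ l₂ := fun h => hel (List.mem_cons_of_mem f h)
    have hlast : (f :: l₂).getLastD g = l₂.getLastD f := List.getLastD_cons
    rw [hlast] at habs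
    obtain ⟨harc, hchain₂⟩ := hc
    obtain ⟨h, l₂'', hh, hcG, habsG, hlen⟩ :=
      IH f hchain₂ habs (fun h => hfu h) hul₂ hel₂
    rcases hh with hh | hh
    -- h = f : need an arc of the new family into f
    · rw [hh] at hcG habsG
      obtain ⟨j, hfj, hgj, hconng, hcutg⟩ := harc
      by_cases hj : j = i₁
      · subst hj
        have hfG : f ∈ insert u ((F j).erase e₁) :=
          Finset.mem_insert_of_mem (Finset.mem_erase.mpr ⟨hfe₁, hfj⟩)
        have hgG : g ∉ insert u ((F j).erase e₁) := by
          intro hmem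
          rcases Finset.mem_insert.mp hmem with rfl | hmem
          · exact hgu rfl
          · exact hgj (Finset.mem_of_mem_erase hmem)
        by_cases hbroken : conn ends ((insert u ((F j).erase e₁)).erase f) (ends g).1 (ends g).2
        · -- broken arc: jump from e₁ instead
          have hue₁ : u ≠ e₁ := fun h => hu j (h ▸ he₁)
          have hMf : (insert u ((F j).erase e₁)).erase f
              = insert u ((((F j).erase f)).erase e₁) := by
            rw [Finset.erase_insert_of_ne (Ne.symm hfu), Finset.erase_right_comm]
          have he₁K : e₁ ∈ (F j).erase f := Finset.mem_erase.mpr ⟨Ne.symm hfe₁, he₁⟩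
          have hsubM : insert u ((((F j).erase f)).erase e₁)
              ⊆ insert u ((F j).erase f) := by
            intro t ht
            rcases Finset.mem_insert.mp ht with rfl | ht
            · exact Finset.mem_insert_self _ _
            · exact Finset.mem_insert_of_mem (Finset.mem_of_mem_erase ht)
          have hnew : ¬ conn ends ((insert u ((F j).erase e₁)).erase f)
              (ends e₁).1 (ends e₁).2 := by
            intro hδ
            rw [hMf] at hδ hbroken
            -- analyze hδ: connectivity of the ends of e₁ in insert u (K.erase e₁), K = (F j).erase f
            have hK : conn ends ((F j).erase f) (ends u).1 (ends u).2 := by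
              rcases conn_insert_elim hδ with h' | ⟨h1, h2⟩ | ⟨h1, h2⟩
              · exact absurd (conn_mono (Finset.erase_subset_erase _ (Finset.erase_subset _ _))
                  (by rwa [Finset.erase_right_comm] at h')) (hForest e₁ he₁)
              · have hsub : (((F j).erase f)).erase e₁ ⊆ (F j).erase f := Finset.erase_subset _ _
                exact ((conn_symm (conn_mono hsub h1)).trans (conn_step he₁K)).trans
                  (conn_symm (conn_mono hsub h2))
              · have hsub : (((F j).erase f)).erase e₁ ⊆ (F j).erase f := Finset.erase_subset _ _
                exact (conn_mono hsub h2).trans ((conn_symm (conn_step he₁K)).trans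
                  (conn_mono hsub h1))
            -- now transfer hbroken into K and contradict hcutg
            have hgK : conn ends (insert u ((F j).erase f)) (ends g).1 (ends g).2 :=
              conn_mono hsubM hbroken
            exact hcutg (conn_insert_eq hK hgK)
          have harcG : Arc ends (Function.update F j (insert u ((F j).erase e₁))) e₁ f := by
            refine ⟨j, ?_, ?_, ?_, ?_⟩
            · rw [Function.update_self]; exact hfG
            · rw [Function.update_self]
              intro hmem
              rcases Finset.mem_insert.mp hmem with h' | h'
              · exact hue₁ h'.symm
              · exact Finset.notMem_erase _ _ h'
            · rw [Function.update_self]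
              exact (hiff _ _).mpr (conn_step he₁)
            · rw [Function.update_self]
              exact hnew
          refine ⟨e₁, f :: l₂'', Or.inr rfl, ⟨harcG, hcG⟩, ?_, ?_⟩
          · rw [List.getLastD_cons]; exact habsG
          · simpa using Nat.succ_le_succ hlen
        · -- arc survives
          have harcG : Arc ends (Function.update F j (insert u ((F j).erase e₁))) g f := by
            refine ⟨j, ?_, ?_, ?_, ?_⟩
            · rw [Function.update_self]; exact hfG
            · rw [Function.update_self]; exact hgG
            · rw [Function.update_self]; exact (hiff _ _).mpr hconng
            · rw [Function.update_self]; exact hbroken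
          refine ⟨g, f :: l₂'', Or.inl rfl, ⟨harcG, hcG⟩, ?_, ?_⟩
          · rw [List.getLastD_cons]; exact habsG
          · simpa using Nat.succ_le_succ hlen
      · have harcG : Arc ends (Function.update F i₁ (insert u ((F i₁).erase e₁))) g f := by
          refine ⟨j, ?_, ?_, ?_, ?_⟩ <;> rw [Function.update_of_ne hj]
          · exact hfj
          · exact hgj
          · exact hconng
          · exact hcutg
        refine ⟨g, f :: l₂'', Or.inl rfl, ⟨harcG, hcG⟩, ?_, ?_⟩
        · rw [List.getLastD_cons]; exact habsG
        · simpa using Nat.succ_le_succ hlen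
    -- h = e₁ : pass the chain through
    · rw [hh] at hcG habsG
      exact ⟨e₁, l₂'', Or.inr rfl, hcG, habsG, hlen.trans (Nat.le_succ _)⟩

end Packing
end Aux
namespace Aux
set_option linter.unusedSectionVars false
set_option maxHeartbeats 1000000
open MG Finset
open scoped Classical

variable {V E : Type} [Fintype V] [Fintype E] [DecidableEq V] [DecidableEq E]
variable {ends : E → V × V}

section Packing2
variable {m : ℕ} {S : Finset E}

/-- The partition condition. -/
def Cond (ends : E → V × V) (m : ℕ) (S : Finset E) : Prop :=
  ∀ c : V → Finset V, m * ((univ.image c).card - 1)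
    ≤ (S.filter fun e => c (ends e).1 ≠ c (ends e).2).card

lemma sum_update_card (F : Fin m → Finset E) (i₁ : Fin m) (s : Finset E) :
    (∑ i, ((Function.update F i₁ s) i).card) + (F i₁).card
      = (∑ i, (F i).card) + s.card := by
  have hpt : ∀ x, ((Function.update F i₁ s) x).card
      = Function.update (fun i => (F i).card) i₁ s.card x := by
    intro x
    by_cases hx : x = i₁
    · subst hx; rw [Function.update_self, Function.update_self]
    · rw [Function.update_of_ne hx, Function.update_of_ne hx]
  rw [Finset.sum_congr rfl (fun x _ => hpt x), Finset.sum_update_of_mem (Finset.mem_univ i₁)]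
  rw [Finset.sdiff_singleton_eq_erase]
  have h2 : (F i₁).card + ∑ x ∈ univ.erase i₁, (F x).card = ∑ i, (F i).card :=
    Finset.add_sum_erase univ (fun x => (F x).card) (Finset.mem_univ i₁)
  omega

lemma augment_base (F : Fin m → Finset E) (hFam : Fam ends S F) {u : E}
    (huS : u ∈ S) (hu : ∀ i, u ∉ F i) (habs : Absorb ends F u) :
    ∃ F' : Fin m → Finset E, Fam ends S F' ∧ (∑ i, (F' i).card) = (∑ i, (F i).card) + 1 := by
  obtain ⟨j, hjF, hjc⟩ := habs
  refine ⟨Function.update F j (insert u (F j)), ⟨?_, ?_⟩, ?_⟩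
  · intro i
    by_cases hi : i = j
    · subst hi; rw [Function.update_self]
      exact ⟨Finset.insert_subset huS (hFam.1 i).1, forest_insert (hFam.1 i).2 hjc⟩
    · rw [Function.update_of_ne hi]; exact hFam.1 i
  · intro i i' hne
    by_cases hi : i = j <;> by_cases hi' : i' = j
    · exact absurd (hi.trans hi'.symm) hne
    · subst hi; rw [Function.update_self, Function.update_of_ne hi']
      exact Finset.disjoint_insert_left.mpr ⟨hu i', hFam.2 _ _ hne⟩
    · subst hi'; rw [Function.update_self, Function.update_of_ne hi]
      exact Finset.disjoint_insert_right.mpr ⟨hu i, hFam.2 _ _ hne⟩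
    · rw [Function.update_of_ne hi, Function.update_of_ne hi']; exact hFam.2 _ _ hne
  · have := sum_update_card F j (insert u (F j))
    rw [Finset.card_insert_of_notMem (hu j)] at this
    omega

lemma key_aug : ∀ (t : ℕ) (F : Fin m → Finset E), Fam ends S F →
    ∀ (u : E) (l : List E), u ∈ S → (∀ i, u ∉ F i) → ArcChain ends F l u →
    Absorb ends F (l.getLastD u) → l.length = t →
    ∃ F' : Fin m → Finset E, Fam ends S F' ∧ (∑ i, (F' i).card) = (∑ i, (F i).card) + 1 := by
  intro t
  induction t using Nat.strong_induction_on with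
  | _ t IH =>
    intro F hFam u l huS hu hc habs hlen
    by_cases hmin : ∃ l' : List E, l'.length < t ∧ ArcChain ends F l' u ∧
        Absorb ends F (l'.getLastD u)
    · obtain ⟨l', hl', hc', habs'⟩ := hmin
      exact IH l'.length hl' F hFam u l' huS hu hc' habs' rfl
    · cases l with
      | nil => exact augment_base F hFam huS hu habs
      | cons e₁ l' =>
        have hnd : (u :: e₁ :: l').Nodup := by
          by_contra hnd
          obtain ⟨l'', hlt, hc'', habs''⟩ := chain_shorten hc habs hnd
          exact hmin ⟨l'', by omega, hc'', habs''⟩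
        obtain ⟨harc, hchain'⟩ := hc
        rw [List.nodup_cons] at hnd
        have hue : u ∉ e₁ :: l' := hnd.1
        have hnd2 := hnd.2
        rw [List.nodup_cons] at hnd2
        have he₁l' : e₁ ∉ l' := hnd2.1
        have hu_e₁ : u ≠ e₁ := fun h => hue (h ▸ List.mem_cons_self)
        have hul' : u ∉ l' := fun h => hue (List.mem_cons_of_mem e₁ h)
        obtain ⟨i₁, he₁i, hui, hconnu, hcut⟩ := harc
        have hlaste : (e₁ :: l').getLastD u = l'.getLastD e₁ := List.getLastD_cons
        rw [hlaste] at habs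
        obtain ⟨h, l'', hh, hcG, habsG, hlen''⟩ :=
          swap_chain F hFam hu he₁i hconnu hcut l' e₁ hchain' habs
            (Ne.symm hu_e₁) hul' he₁l'
        have hh' : h = e₁ := by rcases hh with h' | h' <;> exact h'
        rw [hh'] at hcG habsG
        -- the updated family
        have hFamG : Fam ends S (Function.update F i₁ (insert u ((F i₁).erase e₁))) := by
          constructor
          · intro i
            by_cases hi : i = i₁
            · subst hi; rw [Function.update_self]
              refine ⟨Finset.insert_subset huS
                ((Finset.erase_subset _ _).trans (hFam.1 i).1), ?_⟩
              exact exchange_forest hui hconnu he₁i hcut (hFam.1 i).2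
            · rw [Function.update_of_ne hi]; exact hFam.1 i
          · intro i i' hne
            by_cases hi : i = i₁ <;> by_cases hi' : i' = i₁
            · exact absurd (hi.trans hi'.symm) hne
            · subst hi; rw [Function.update_self, Function.update_of_ne hi']
              refine Finset.disjoint_insert_left.mpr ⟨hu i', ?_⟩
              exact Finset.disjoint_of_subset_left (Finset.erase_subset _ _) (hFam.2 _ _ hne)
            · subst hi'; rw [Function.update_self, Function.update_of_ne hi]
              refine Finset.disjoint_insert_right.mpr ⟨hu i, ?_⟩
              exact Finset.disjoint_of_subset_right (Finset.erase_subset _ _) (hFam.2 _ _ hne)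
            · rw [Function.update_of_ne hi, Function.update_of_ne hi']; exact hFam.2 _ _ hne
        have he₁S : e₁ ∈ S := (hFam.1 i₁).1 he₁i
        have he₁G : ∀ i, e₁ ∉ (Function.update F i₁ (insert u ((F i₁).erase e₁))) i := by
          intro i
          by_cases hi : i = i₁
          · subst hi; rw [Function.update_self]
            intro hmem
            rcases Finset.mem_insert.mp hmem with h' | h'
            · exact hu_e₁ h'.symm
            · exact Finset.notMem_erase _ _ h'
          · rw [Function.update_of_ne hi]
            intro hmem
            exact (Finset.disjoint_left.mp (hFam.2 i₁ i (fun hq => hi hq.symm))) he₁i hmem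
        obtain ⟨F', hF', hsum'⟩ := IH l''.length (by simp at hlen; omega)
          (Function.update F i₁ (insert u ((F i₁).erase e₁))) hFamG e₁ l'' he₁S he₁G
          hcG habsG rfl
        refine ⟨F', hF', ?_⟩
        rw [hsum']
        have hs := sum_update_card F i₁ (insert u ((F i₁).erase e₁))
        rw [Finset.card_insert_of_notMem (fun h' => hui (Finset.mem_of_mem_erase h')),
          Finset.card_erase_of_mem he₁i] at hs
        have hpos : 0 < (F i₁).card := Finset.card_pos.mpr ⟨e₁, he₁i⟩
        omega

lemma rtg_chain {F : Fin m → Finset E} {v e : E}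
    (h : Relation.ReflTransGen (Arc ends F) v e) :
    ∃ l : List E, ArcChain ends F l v ∧ l.getLastD v = e := by
  induction h with
  | refl => exact ⟨[], trivial, rfl⟩
  | tail hrtg harc IH =>
    rename_i b c
    obtain ⟨l, hcl, hl⟩ := IH
    refine ⟨l ++ [c], (arcChain_append l [c] v).mpr ⟨hcl, ?_⟩, by rw [getLastD_append]; rfl⟩
    show Arc ends F (l.getLastD v) c ∧ ArcChain ends F [] c
    rw [hl]
    exact ⟨harc, trivial⟩

lemma augment_step [Nonempty V] (hm : 0 < m) (F : Fin m → Finset E)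
    (hFam : Fam ends S F) (hcond : Cond ends m S)
    (hlt : ∑ i, (F i).card < m * (Fintype.card V - 1)) :
    ∃ F' : Fin m → Finset E, Fam ends S F' ∧ (∑ i, (F' i).card) = (∑ i, (F i).card) + 1 := by
  by_cases hex : ∃ (u : E) (l : List E), (u ∈ S ∧ ∀ i, u ∉ F i) ∧
      ArcChain ends F l u ∧ Absorb ends F (l.getLastD u)
  · obtain ⟨u, l, ⟨huS, hu⟩, hcl, habs⟩ := hex
    exact key_aug l.length F hFam u l huS hu hcl habs rfl
  · exfalso
    push_neg at hex
    set R : Finset E := univ.filter (fun e => ∃ u, (u ∈ S ∧ ∀ i, u ∉ F i) ∧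
      Relation.ReflTransGen (Arc ends F) u e) with hR
    have hmemR : ∀ e, e ∈ R ↔ ∃ u, (u ∈ S ∧ ∀ i, u ∉ F i) ∧
        Relation.ReflTransGen (Arc ends F) u e := by
      intro e; rw [hR, Finset.mem_filter]; simp
    have hNA : ∀ e ∈ R, ¬ Absorb ends F e := by
      intro e he habse
      obtain ⟨u, hu, hrtg⟩ := (hmemR e).mp he
      obtain ⟨l, hcl, hl⟩ := rtg_chain hrtg
      exact hex u l hu hcl (by rwa [hl])
    have hclosed : ∀ e ∈ R, ∀ f, Arc ends F e f → f ∈ R := by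
      intro e he f harc
      obtain ⟨u, hu, hrtg⟩ := (hmemR e).mp he
      exact (hmemR f).mpr ⟨u, hu, hrtg.tail harc⟩
    have hconnR : ∀ e ∈ R, ∀ i, conn ends ((F i) ∩ R) (ends e).1 (ends e).2 := by
      intro e he i
      by_cases hei : e ∈ F i
      · exact conn_step (Finset.mem_inter.mpr ⟨hei, he⟩)
      · have hc : conn ends (F i) (ends e).1 (ends e).2 := by
          by_contra hcc
          exact hNA e he ⟨i, hei, hcc⟩
        refine conn_mono ?_ (forest_conn_filter (hFam.1 i).2 hc)
        intro g hg
        obtain ⟨hgF, hgcut⟩ := Finset.mem_filter.mp hg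
        exact Finset.mem_inter.mpr ⟨hgF, hclosed e he g ⟨i, hgF, hei, hc, hgcut⟩⟩
    set D : Finset E := R.filter (fun e => ∃ i, e ∈ F i) with hD
    have hFiRD : ∀ i : Fin m, (F i) ∩ R ⊆ D := by
      intro i g hg
      obtain ⟨hgF, hgR⟩ := Finset.mem_inter.mp hg
      exact Finset.mem_filter.mpr ⟨hgR, ⟨i, hgF⟩⟩
    have hDiff : ∀ (i : Fin m) (a b : V), conn ends D a b ↔ conn ends ((F i) ∩ R) a b := by
      intro i a b
      constructor
      · refine fun h => conn_of_all_steps (fun e he => ?_) h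
        have heR : e ∈ R := (Finset.mem_filter.mp he).1
        exact hconnR e heR i
      · exact conn_mono (hFiRD i)
    set k := ncomp ends D with hk
    have hki : ∀ i : Fin m, ((F i) ∩ R).card + k = Fintype.card V := by
      intro i
      rw [hk, ← ncomp_congr (fun a b => (hDiff i a b).symm)]
      exact forest_card (forest_mono Finset.inter_subset_left (hFam.1 i).2)
    have hcross := hcond (cl ends D)
    have hkimg : (univ.image (cl ends D)).card = k := rfl
    rw [hkimg] at hcross
    have i₀ : Fin m := ⟨0, hm⟩
    have hsub : (S.filter fun e => cl ends D (ends e).1 ≠ cl ends D (ends e).2)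
        ⊆ univ.biUnion (fun i : Fin m => F i \ R) := by
      intro e he
      obtain ⟨heS, hne⟩ := Finset.mem_filter.mp he
      have heR : e ∉ R := by
        intro heR
        exact hne (cl_eq_of_conn (conn_mono (hFiRD i₀) (hconnR e heR i₀)))
      have hcov : ∃ i, e ∈ F i := by
        by_contra hcov
        push_neg at hcov
        exact heR ((hmemR e).mpr ⟨e, ⟨heS, hcov⟩, Relation.ReflTransGen.refl⟩)
      obtain ⟨i, hi⟩ := hcov
      exact Finset.mem_biUnion.mpr ⟨i, Finset.mem_univ i, Finset.mem_sdiff.mpr ⟨hi, heR⟩⟩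
    have hcount : (S.filter fun e => cl ends D (ends e).1 ≠ cl ends D (ends e).2).card
        ≤ ∑ i : Fin m, (F i \ R).card :=
      le_trans (Finset.card_le_card hsub) Finset.card_biUnion_le
    have hsplit : ∀ i : Fin m, (F i ∩ R).card + (F i \ R).card = (F i).card :=
      fun i => Finset.card_inter_add_card_sdiff _ _
    have hk1 : 1 ≤ k := ncomp_pos D
    have hkn : k ≤ Fintype.card V := ncomp_le D
    have hΦ : ∑ i, (F i).card = m * (Fintype.card V - k) + ∑ i : Fin m, (F i \ R).card := by
      have h1 : ∀ i : Fin m, (F i).card = (Fintype.card V - k) + (F i \ R).card := by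
        intro i
        have := hki i
        have := hsplit i
        omega
      rw [Finset.sum_congr rfl (fun i _ => h1 i), Finset.sum_add_distrib,
        Finset.sum_const, Finset.card_univ, Fintype.card_fin, smul_eq_mul]
    have hfinal : m * (Fintype.card V - 1) ≤ ∑ i, (F i).card := by
      have hdecomp : (Fintype.card V - 1) = (k - 1) + (Fintype.card V - k) := by omega
      calc m * (Fintype.card V - 1) = m * (k - 1) + m * (Fintype.card V - k) := by
            rw [hdecomp, Nat.mul_add]
        _ ≤ (S.filter fun e => cl ends D (ends e).1 ≠ cl ends D (ends e).2).card
              + m * (Fintype.card V - k) := Nat.add_le_add_right hcross _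
        _ ≤ (∑ i : Fin m, (F i \ R).card) + m * (Fintype.card V - k) :=
              Nat.add_le_add_right hcount _
        _ = ∑ i, (F i).card := by omega
    omega

lemma packing [Nonempty V] (hcond : Cond ends m S) : TreeConnOn ends m S := by
  rcases Nat.eq_zero_or_pos m with rfl | hm
  · exact ⟨fun i => i.elim0, fun i => i.elim0, fun i j _ => i.elim0⟩
  have hreach : ∀ d (F : Fin m → Finset E), Fam ends S F →
      (∑ i, (F i).card) + d = m * (Fintype.card V - 1) →
      ∃ F' : Fin m → Finset E, Fam ends S F' ∧ (∑ i, (F' i).card) = m * (Fintype.card V - 1) := by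
    intro d
    induction d with
    | zero => intro F hF h; exact ⟨F, hF, by omega⟩
    | succ d IH =>
      intro F hF h
      obtain ⟨F', hF', hs⟩ := augment_step hm F hF hcond (by omega)
      exact IH F' hF' (by omega)
  obtain ⟨F, hFam, hsum⟩ := hreach (m * (Fintype.card V - 1)) (fun _ => ∅)
    ⟨fun i => ⟨Finset.empty_subset _, fun e he => absurd he (Finset.notMem_empty e)⟩,
      fun i j _ => Finset.disjoint_empty_left _⟩ (by simp)
  have hle : ∀ i, (F i).card ≤ Fintype.card V - 1 := by
    intro i
    have h1 := forest_card (hFam.1 i).2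
    have h2 := ncomp_pos (ends := ends) (F i)
    omega
  have hall : ∀ i, (F i).card = Fintype.card V - 1 := by
    by_contra hex
    push_neg at hex
    obtain ⟨i, hi⟩ := hex
    have hlt : ∑ j, (F j).card < ∑ _j : Fin m, (Fintype.card V - 1) :=
      Finset.sum_lt_sum (fun j _ => hle j) ⟨i, Finset.mem_univ i, lt_of_le_of_ne (hle i) hi⟩
    rw [Finset.sum_const, Finset.card_univ, Fintype.card_fin, smul_eq_mul] at hlt
    omega
  have hVpos : 0 < Fintype.card V := Fintype.card_pos
  refine ⟨F, fun i => ⟨(hFam.1 i).1, ?_, ?_⟩, hFam.2⟩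
  · intro a b
    have h1 := forest_card (hFam.1 i).2
    have h2 := hall i
    exact conn_of_ncomp_one (by omega) a b
  · rw [hall i]; omega

end Packing2
end Aux
open MG Finset

theorem stmt10 {V E : Type} [Fintype V] [Fintype E] [DecidableEq V] [DecidableEq E]
    (ends : E → V × V) (m : ℕ)
    (hloopless : ∀ e : E, (ends e).1 ≠ (ends e).2)
    (htc : TreeConnOn ends (2 * m) Finset.univ) :
    ∃ H : Finset E, BipOn ends H ∧ TreeConnOn ends m H ∧
      ∀ A : Finset V, ((cut ends Finset.univ A).card + 1) / 2 ≤ (cut ends H A).card := by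
  classical
  obtain ⟨X, -, hmaxX⟩ := Finset.exists_max_image (univ : Finset (Finset V))
    (fun Y => (cut ends univ Y).card) ⟨∅, Finset.mem_univ ∅⟩
  have hmax : ∀ Y : Finset V, (cut ends univ Y).card ≤ (cut ends univ X).card :=
    fun Y => hmaxX Y (Finset.mem_univ Y)
  refine ⟨cut ends Finset.univ X, ⟨X, fun e he => (Finset.mem_filter.mp he).2⟩, ?_, fun A => ?_⟩
  · -- tree-connectivity of the bipartite subgraph
    rcases Nat.eq_zero_or_pos m with rfl | hm
    · exact ⟨fun i => i.elim0, fun i => i.elim0, fun i j _ => i.elim0⟩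
    · obtain ⟨T, hT, hdisj⟩ := htc
      have hVpos : 0 < Fintype.card V := by
        have := (hT ⟨0, by omega⟩).2.2
        omega
      have : Nonempty V := Fintype.card_pos_iff.mp hVpos
      apply Aux.packing
      intro c
      have htree : ∀ i : Fin (2*m), (univ.image c).card - 1
          ≤ ((T i).filter fun e => c (ends e).1 ≠ c (ends e).2).card := by
        intro i
        have := Aux.tree_cross (hT i).2.1 c
        omega
      have hdisj2 : ∀ i ∈ (univ : Finset (Fin (2*m))), ∀ j ∈ (univ : Finset (Fin (2*m))),
          i ≠ j → Disjoint ((T i).filter fun e => c (ends e).1 ≠ c (ends e).2)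
            ((T j).filter fun e => c (ends e).1 ≠ c (ends e).2) :=
        fun i _ j _ hne => Finset.disjoint_filter_filter (hdisj i j hne)
      have hbi : univ.biUnion (fun i : Fin (2*m) =>
            (T i).filter fun e => c (ends e).1 ≠ c (ends e).2)
          ⊆ univ.filter (fun e => c (ends e).1 ≠ c (ends e).2) := by
        intro e he
        obtain ⟨i, _, hi⟩ := Finset.mem_biUnion.mp he
        exact Finset.mem_filter.mpr ⟨Finset.mem_univ e, (Finset.mem_filter.mp hi).2⟩
      have hsum : ∑ i : Fin (2*m),
            ((T i).filter fun e => c (ends e).1 ≠ c (ends e).2).card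
          ≤ (univ.filter (fun e => c (ends e).1 ≠ c (ends e).2)).card := by
        rw [← Finset.card_biUnion hdisj2]
        exact Finset.card_le_card hbi
      have hG : 2 * (m * ((univ.image c).card - 1))
          ≤ (univ.filter (fun e => c (ends e).1 ≠ c (ends e).2)).card := by
        calc 2 * (m * ((univ.image c).card - 1))
            = ∑ _i : Fin (2*m), ((univ.image c).card - 1) := by
              rw [Finset.sum_const, Finset.card_univ, Fintype.card_fin, smul_eq_mul]
              ring
          _ ≤ ∑ i : Fin (2*m),
              ((T i).filter fun e => c (ends e).1 ≠ c (ends e).2).card :=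
              Finset.sum_le_sum (fun i _ => htree i)
          _ ≤ _ := hsum
      have hDCG := Aux.cut_double_count (ends := ends) univ c
      have hDCH := Aux.cut_double_count (ends := ends) (cut ends univ X) c
      have hsum2 : ∑ t ∈ univ.image c,
            (cut ends univ (univ.filter fun v => c v = t)).card
          ≤ 2 * ∑ t ∈ univ.image c,
            (cut ends (cut ends univ X) (univ.filter fun v => c v = t)).card := by
        rw [Finset.mul_sum]
        exact Finset.sum_le_sum (fun t _ => Aux.maxcut_key hmax _)
      rw [hDCG, hDCH] at hsum2
      omega
  · have := Aux.maxcut_key hmax A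
    omega
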